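/- Let n ≥ 1, let G : ℝⁿ → Matrix (Fin n) (Fin n) ℝ be a C¹ map with G(x) symmetric for all x, and let V : ℝⁿ → ℝ be C². Assume: (A1) there are real constants c(i,j,k) such that ∂ᵢG^{jk}(x) = c(i,j,k) for all x; (A2) there are real constants d(i,k) such that ∂ᵢ(Σⱼ G^{jk} ∂ⱼV)(x) = d(i,k) for all x. Let q, φ : ℝ → ℝⁿ be differentiable with q'ʲ(t) = Σₗ G^{jℓ}(q(t)) (φₗ(t) − ∂ₗV(q(t))) and φ'ᵢ(t) + (1/2) Σ_{j,k} c(i,j,k) φⱼ(t) φₖ(t) = Σₖ d(i,k) φₖ(t) for all indices and all t. Then the function φ*ᵢ(t) := φᵢ(t) − 2 ∂ᵢV(q(t)) is differentiable and satisfies the sign-reversed equation φ*'ᵢ(t) + (1/2) Σ_{j,k} c(i,j,k) φ*ⱼ(t) φ*ₖ(t) = − Σₖ d(i,k) φ*ₖ(t) for all i and t. -/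

import Mathlib

/-- Partial derivative of `F : ℝⁿ → ℝ` in the `i`-th coordinate direction. -/
noncomputable def pd {n : ℕ} (F : (Fin n → ℝ) → ℝ) (i : Fin n) (x : Fin n → ℝ) : ℝ :=
  fderiv ℝ F x (Pi.single i 1)

private lemma clm_eval_sum {n : ℕ} (L : (Fin n → ℝ) →L[ℝ] ℝ) (v : Fin n → ℝ) :
    L v = ∑ j, v j * L (Pi.single j 1) := by
  have hv : v = ∑ j, v j • (Pi.single j 1 : Fin n → ℝ) := by
    funext k
    simp [Finset.sum_apply, Pi.single_apply]
  conv_lhs => rw [hv]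
  rw [map_sum]
  simp [smul_eq_mul]

private lemma pd_comm {n : ℕ} {V : (Fin n → ℝ) → ℝ} (hV : ContDiff ℝ 2 V)
    (j k : Fin n) (x : Fin n → ℝ) :
    pd (pd V j) k x = pd (pd V k) j x := by
  have hVd : Differentiable ℝ V := hV.differentiable two_ne_zero
  have hfd : ContDiff ℝ 1 (fderiv ℝ V) := hV.fderiv_right (by norm_num)
  have hfx : HasFDerivAt (fderiv ℝ V) (fderiv ℝ (fderiv ℝ V) x) x :=
    ((hfd.differentiable one_ne_zero) x).hasFDerivAt
  have hsym := second_derivative_symmetric (fun y => (hVd y).hasFDerivAt) hfx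
  have key : ∀ v w : Fin n → ℝ,
      fderiv ℝ (fun y => fderiv ℝ V y v) x w = fderiv ℝ (fderiv ℝ V) x w v := by
    intro v w
    have h : HasFDerivAt (fun y => fderiv ℝ V y v)
        ((ContinuousLinearMap.apply ℝ ℝ v).comp (fderiv ℝ (fderiv ℝ V) x)) x :=
      (ContinuousLinearMap.apply ℝ ℝ v).hasFDerivAt.comp x hfx
    rw [h.fderiv]
    rfl
  show fderiv ℝ (fun y => fderiv ℝ V y (Pi.single j 1)) x (Pi.single k 1)
      = fderiv ℝ (fun y => fderiv ℝ V y (Pi.single k 1)) x (Pi.single j 1)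
  rw [key, key, hsym]

private lemma alg {n : ℕ} (a b D E dmi : Fin n → ℝ) (cc : Fin n → Fin n → ℝ) (dphi : ℝ)
    (hsym : ∀ j k, cc j k = cc k j)
    (hD : ∀ k, D k = ∑ j, cc j k * b j)
    (hdm : ∀ k, dmi k = D k + E k)
    (hode : dphi + (1/2) * (∑ j, ∑ k, cc j k * a j * a k) = ∑ k, dmi k * a k) :
    dphi - 2 * (∑ k, E k * (a k - b k))
      = -(1/2) * (∑ j, ∑ k, cc j k * (a j - 2 * b j) * (a k - 2 * b k))
        - ∑ k, dmi k * (a k - 2 * b k) := by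
  simp only [hdm] at hode ⊢
  have e1 : ∀ u v : Fin n → ℝ,
      (∑ j, ∑ k, cc j k * u j * v k) = ∑ k, (∑ j, cc j k * u j) * v k := by
    intro u v
    rw [Finset.sum_comm]
    exact Finset.sum_congr rfl fun k _ => (Finset.sum_mul _ _ _).symm
  have e2 : (∑ j, ∑ k, cc j k * a j * b k) = ∑ k, D k * a k := by
    have swap : (∑ j, ∑ k, cc j k * a j * b k) = ∑ j, ∑ k, cc j k * b j * a k := by
      rw [Finset.sum_comm]
      exact Finset.sum_congr rfl fun k _ => Finset.sum_congr rfl fun j _ => by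
        rw [hsym]; ring
    rw [swap, e1]
    exact Finset.sum_congr rfl fun k _ => by rw [hD]
  have e3 : (∑ j, ∑ k, cc j k * b j * a k) = ∑ k, D k * a k := by
    rw [e1]
    exact Finset.sum_congr rfl fun k _ => by rw [hD]
  have e4 : (∑ j, ∑ k, cc j k * b j * b k) = ∑ k, D k * b k := by
    rw [e1]
    exact Finset.sum_congr rfl fun k _ => by rw [hD]
  have expand : (∑ j, ∑ k, cc j k * (a j - 2 * b j) * (a k - 2 * b k))
      = (∑ j, ∑ k, cc j k * a j * a k) - 2 * (∑ j, ∑ k, cc j k * a j * b k)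
        - 2 * (∑ j, ∑ k, cc j k * b j * a k) + 4 * (∑ j, ∑ k, cc j k * b j * b k) := by
    simp only [Finset.mul_sum, ← Finset.sum_sub_distrib, ← Finset.sum_add_distrib]
    exact Finset.sum_congr rfl fun j _ => Finset.sum_congr rfl fun k _ => by ring
  have comb : (∑ k, (D k + E k) * a k) - 2 * (∑ k, E k * (a k - b k))
      + (∑ k, (D k + E k) * (a k - 2 * b k)) - 2 * (∑ k, D k * a k)
      + 2 * (∑ k, D k * b k) = 0 := by
    simp only [Finset.mul_sum, ← Finset.sum_sub_distrib, ← Finset.sum_add_distrib]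
    exact Finset.sum_eq_zero fun k _ => by ring
  rw [expand, e2, e3, e4]
  linarith [hode, comb]

/-- under assumptions (A1) and (A2), if `(q, φ)` solves the
constraint `q'ʲ = Σₗ G^{jℓ}(q)(φₗ − ∂ₗV(q))` together with the coordinate
Euler–Lagrange equation for `φ`, then `φ*ᵢ := φᵢ − 2∂ᵢV(q)` is differentiable
and solves the sign-reversed equation
`φ*'ᵢ + (1/2) Σ c(i,j,k) φ*ⱼφ*ₖ = −Σₖ d(i,k) φ*ₖ`. -/
theorem stmt6 {n : ℕ} (hn : 1 ≤ n)
    (G : (Fin n → ℝ) → Fin n → Fin n → ℝ)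
    (hG : ∀ j k, ContDiff ℝ 1 (fun x => G x j k))
    (hGsymm : ∀ x j k, G x j k = G x k j)
    (V : (Fin n → ℝ) → ℝ) (hV : ContDiff ℝ 2 V)
    (c : Fin n → Fin n → Fin n → ℝ)
    (hA1 : ∀ i j k x, pd (fun y => G y j k) i x = c i j k)
    (dm : Fin n → Fin n → ℝ)
    (hA2 : ∀ i k x, pd (fun y => ∑ j, G y j k * pd V j y) i x = dm i k)
    (q dq φ dφ : ℝ → Fin n → ℝ)
    (hq : ∀ j t, HasDerivAt (fun s => q s j) (dq t j) t)
    (hconstr : ∀ j t, dq t j = ∑ l, G (q t) j l * (φ t l - pd V l (q t)))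
    (hφ : ∀ i t, HasDerivAt (fun s => φ s i) (dφ t i) t)
    (hode : ∀ i t, dφ t i + (1/2) * ∑ j, ∑ k, c i j k * φ t j * φ t k
      = ∑ k, dm i k * φ t k) :
    ∀ i t, HasDerivAt (fun s => φ s i - 2 * pd V i (q s))
      (-(1/2) * (∑ j, ∑ k, c i j k * (φ t j - 2 * pd V j (q t)) * (φ t k - 2 * pd V k (q t)))
        - ∑ k, dm i k * (φ t k - 2 * pd V k (q t))) t := by
  intro i t
  have hfd : ContDiff ℝ 1 (fderiv ℝ V) := hV.fderiv_right (by norm_num)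
  have hpdC : ∀ j : Fin n, ContDiff ℝ 1 (pd V j) := fun j =>
    hfd.clm_apply contDiff_const
  -- derivative of q as a pi-type map
  have hq' : HasDerivAt q (dq t) t := hasDerivAt_pi.2 fun j => hq j t
  -- chain rule for pd V i ∘ q
  have hchain : HasDerivAt (fun s => pd V i (q s)) (fderiv ℝ (pd V i) (q t) (dq t)) t :=
    (((hpdC i).differentiable one_ne_zero (q t)).hasFDerivAt).comp_hasDerivAt t hq'
  have hmain : HasDerivAt (fun s => φ s i - 2 * pd V i (q s))
      (dφ t i - 2 * fderiv ℝ (pd V i) (q t) (dq t)) t :=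
    (hφ i t).sub (hchain.const_mul 2)
  -- symmetry of c in last two indices
  have hcs : ∀ j k, c i j k = c i k j := by
    intro j k
    have hGe : (fun y => G y j k) = fun y => G y k j := funext fun y => hGsymm y j k
    rw [← hA1 i j k (q t), ← hA1 i k j (q t), hGe]
  -- product rule consequence of (A2)
  have hdm : ∀ k, dm i k
      = (∑ j, c i j k * pd V j (q t)) + ∑ j, G (q t) j k * pd (pd V j) i (q t) := by
    intro k
    have hsumF : HasFDerivAt (fun y => ∑ j, G y j k * pd V j y)
        (∑ j, (G (q t) j k • fderiv ℝ (pd V j) (q t)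
          + pd V j (q t) • fderiv ℝ (fun y => G y j k) (q t))) (q t) :=
      HasFDerivAt.fun_sum fun j _ =>
        (((hG j k).differentiable one_ne_zero (q t)).hasFDerivAt).mul
          (((hpdC j).differentiable one_ne_zero (q t)).hasFDerivAt)
    have : pd (fun y => ∑ j, G y j k * pd V j y) i (q t)
        = ∑ j, (G (q t) j k * pd (pd V j) i (q t) + pd V j (q t) * c i j k) := by
      show fderiv ℝ (fun y => ∑ j, G y j k * pd V j y) (q t) (Pi.single i 1) = _
      rw [hsumF.fderiv]
      rw [ContinuousLinearMap.sum_apply]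
      refine Finset.sum_congr rfl fun j _ => ?_
      rw [ContinuousLinearMap.add_apply, ContinuousLinearMap.smul_apply,
        ContinuousLinearMap.smul_apply, smul_eq_mul, smul_eq_mul, ← hA1 i j k (q t)]
      rfl
    rw [← hA2 i k (q t), this, Finset.sum_add_distrib, add_comm]
    congr 1
    exact Finset.sum_congr rfl fun j _ => mul_comm _ _
  -- rewrite the chain term
  have echain : (∑ j, dq t j * fderiv ℝ (pd V i) (q t) (Pi.single j 1))
      = ∑ k, (∑ j, G (q t) j k * pd (pd V j) i (q t)) * (φ t k - pd V k (q t)) := by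
    calc (∑ j, dq t j * fderiv ℝ (pd V i) (q t) (Pi.single j 1))
        = ∑ j, ∑ l, G (q t) j l * (φ t l - pd V l (q t)) * pd (pd V j) i (q t) := by
          refine Finset.sum_congr rfl fun j _ => ?_
          have hpd : fderiv ℝ (pd V i) (q t) (Pi.single j 1) = pd (pd V i) j (q t) := rfl
          rw [hpd, pd_comm hV i j (q t), hconstr j t, Finset.sum_mul]
      _ = ∑ k, (∑ j, G (q t) j k * pd (pd V j) i (q t)) * (φ t k - pd V k (q t)) := by
          rw [Finset.sum_comm]
          refine Finset.sum_congr rfl fun k _ => ?_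
          rw [Finset.sum_mul]
          exact Finset.sum_congr rfl fun j _ => by ring
  have hval : dφ t i - 2 * fderiv ℝ (pd V i) (q t) (dq t)
      = -(1/2) * (∑ j, ∑ k, c i j k * (φ t j - 2 * pd V j (q t)) * (φ t k - 2 * pd V k (q t)))
        - ∑ k, dm i k * (φ t k - 2 * pd V k (q t)) := by
    rw [clm_eval_sum (fderiv ℝ (pd V i) (q t)) (dq t), echain]
    exact alg (φ t) (fun j => pd V j (q t))
      (fun k => ∑ j, c i j k * pd V j (q t))
      (fun k => ∑ j, G (q t) j k * pd (pd V j) i (q t))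
      (dm i) (fun j k => c i j k) (dφ t i)
      hcs (fun k => rfl) hdm (hode i t)
  exact hval ▸ hmain
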